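/- Let G be a 2-connected graph and C a longest cycle of G such that G − C has a component H with at least 2 vertices. Then there exist two distinct vertices v1, v2 on C each having a neighbor in H such that |N_G(v1; H) ∪ N_G(v2; H)| ≥ 2, and moreover both arcs of C between v1 and v2 contain at least 4 vertices (including endpoints). -/

import Mathlib

open SimpleGraph

variable {V : Type*} [Fintype V] [DecidableEq V]

/-- `p 0, p 1, ..., p (n-1)` is a path of order `n` in `G`. -/
def IsPathOn (G : SimpleGraph V) (n : ℕ) (p : ℕ → V) : Prop :=
  (∀ i j, i < n → j < n → p i = p j → i = j) ∧
  (∀ i, i + 1 < n → G.Adj (p i) (p (i + 1)))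

/-- An induced path of order `n` in `G`. -/
def IsInducedPathOn (G : SimpleGraph V) (n : ℕ) (p : ℕ → V) : Prop :=
  IsPathOn G n p ∧ ∀ i j, i < n → j < n → G.Adj (p i) (p j) → (i + 1 = j ∨ j + 1 = i)

/-- `G` contains no induced path on 5 vertices. -/
def P5Free (G : SimpleGraph V) : Prop := ¬ ∃ p : ℕ → V, IsInducedPathOn G 5 p

/-- `G` contains no induced `K₄` minus an edge. -/
def K4mFree (G : SimpleGraph V) : Prop :=
  ¬ ∃ a b c d : V, a ≠ b ∧ a ≠ c ∧ a ≠ d ∧ b ≠ c ∧ b ≠ d ∧ c ≠ d ∧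
    G.Adj a b ∧ G.Adj a c ∧ G.Adj a d ∧ G.Adj b c ∧ G.Adj b d ∧ ¬ G.Adj c d

/-- `G` contains no induced `W*` (two triangles `abc`, `def` joined by the edge `cd`). -/
def WStarFree (G : SimpleGraph V) : Prop :=
  ¬ ∃ a b c d e f : V, List.Nodup [a, b, c, d, e, f] ∧
    G.Adj a b ∧ G.Adj b c ∧ G.Adj a c ∧ G.Adj d e ∧ G.Adj e f ∧ G.Adj d f ∧ G.Adj c d ∧
    ¬ G.Adj a d ∧ ¬ G.Adj a e ∧ ¬ G.Adj a f ∧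
    ¬ G.Adj b d ∧ ¬ G.Adj b e ∧ ¬ G.Adj b f ∧ ¬ G.Adj c e ∧ ¬ G.Adj c f

/-- `G` contains no induced paw (triangle `abc` with pendant edge `cd`). -/
def Z1Free (G : SimpleGraph V) : Prop :=
  ¬ ∃ a b c d : V, List.Nodup [a, b, c, d] ∧
    G.Adj a b ∧ G.Adj b c ∧ G.Adj a c ∧ G.Adj c d ∧ ¬ G.Adj a d ∧ ¬ G.Adj b d

/-- An (oriented) cycle of length `n` in `G`, as an injective map `ZMod n → V`
with consecutive vertices adjacent. -/
def IsCycleOn (G : SimpleGraph V) (n : ℕ) (c : ZMod n → V) : Prop :=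
  3 ≤ n ∧ Function.Injective c ∧ ∀ i, G.Adj (c i) (c (i + 1))

/-- A longest cycle of `G`. -/
def IsLongestCycle (G : SimpleGraph V) (n : ℕ) (c : ZMod n → V) : Prop :=
  IsCycleOn G n c ∧ ∀ (m : ℕ) (d : ZMod m → V), IsCycleOn G m d → m ≤ n

/-- A dominating cycle: every edge of `G` is incident with a vertex of the cycle. -/
def DominatingCycle (G : SimpleGraph V) (n : ℕ) (c : ZMod n → V) : Prop :=
  IsCycleOn G n c ∧ ∀ u v : V, G.Adj u v → u ∈ Set.range c ∨ v ∈ Set.range c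

/-- `H` is (the vertex set of) a connected component of `G - R`. -/
def IsCompOff (G : SimpleGraph V) (R : Set V) (H : Set V) : Prop :=
  H.Nonempty ∧ Disjoint H R ∧ (G.induce H).Connected ∧
  ∀ u v : V, u ∈ H → v ∉ H → v ∉ R → ¬ G.Adj u v

/-- `μ`: the maximum order of a component of `G - R`. -/
noncomputable def muC (G : SimpleGraph V) (R : Set V) : ℕ :=
  sSup {k | ∃ H : Set V, IsCompOff G R H ∧ H.ncard = k}

/-- `ω`: the number of components of `G - R` of maximum order. -/
noncomputable def omegaC (G : SimpleGraph V) (R : Set V) : ℕ :=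
  {H : Set V | IsCompOff G R H ∧ H.ncard = muC G R}.ncard

/-- `G` is 2-connected: at least 3 vertices, connected, and removing any
vertex leaves it connected. -/
def TwoConnected (G : SimpleGraph V) : Prop :=
  3 ≤ Fintype.card V ∧ G.Connected ∧
  ∀ v : V, (G.induce ({v}ᶜ : Set V)).Connected

/-- The set of indices of `ZMod n` encountered going from `s` to `t` in the
positive direction (including both `s` and `t`). -/
def seg (n : ℕ) (s t : ZMod n) : Set (ZMod n) :=
  {x | ∃ k : ℕ, x = s + (k : ZMod n) ∧ ∀ m : ℕ, m < k → s + (m : ZMod n) ≠ t}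

/-- `G` is complete multipartite: the vertices partition into classes of an
equivalence relation which are independent, with all edges between classes. -/
def CompleteMultipartite (G : SimpleGraph V) : Prop :=
  ∃ r : V → V → Prop, Equivalence r ∧ ∀ u v : V, u ≠ v → (G.Adj u v ↔ ¬ r u v)

/-- A `C`-path (for `R = V(C)`): a path of order at least 2 whose ends lie in
`R` and whose internal vertices avoid `R`. -/
def IsCPath (G : SimpleGraph V) (R : Set V) (m : ℕ) (p : ℕ → V) : Prop :=
  2 ≤ m ∧ IsPathOn G m p ∧ p 0 ∈ R ∧ p (m - 1) ∈ R ∧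
  ∀ i, 0 < i → i < m - 1 → p i ∉ R

section Aux
set_option linter.unusedSectionVars false


private lemma zmod_val_inj {m : ℕ} [NeZero m] {i j : ZMod m} (h : i.val = j.val) : i = j := by
  have : ((i.val : ℕ) : ZMod m) = ((j.val : ℕ) : ZMod m) := by rw [h]
  rwa [ZMod.natCast_val, ZMod.cast_id, ZMod.natCast_val, ZMod.cast_id] at this

/-- First exit from `H` along a walk in `G`. -/
private lemma exit_plain {G : SimpleGraph V} {H : Set V} :
    ∀ {a b : V}, G.Walk a b → a ∈ H → b ∉ H →
      ∃ u v : V, u ∈ H ∧ v ∉ H ∧ G.Adj u v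
  | _, _, SimpleGraph.Walk.nil, ha, hb => absurd ha hb
  | _, _, @SimpleGraph.Walk.cons _ _ x y z h p, ha, hb => by
    by_cases hm : y ∈ H
    · exact exit_plain p hm hb
    · exact ⟨x, y, ha, hm, h⟩

/-- First exit from `H` along a walk in an induced subgraph. -/
private lemma exit_subtype {G : SimpleGraph V} {S : Set V} {H : Set V} :
    ∀ {a b : ↥S}, (G.induce S).Walk a b → (a : V) ∈ H → (b : V) ∉ H →
      ∃ u v : V, u ∈ S ∧ v ∈ S ∧ u ∈ H ∧ v ∉ H ∧ G.Adj u v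
  | _, _, SimpleGraph.Walk.nil, ha, hb => absurd ha hb
  | _, _, @SimpleGraph.Walk.cons _ _ x y z h p, ha, hb => by
    by_cases hm : (y : V) ∈ H
    · exact exit_subtype p hm hb
    · exact ⟨x, y, x.2, y.2, ha, hm, by simpa using h⟩

/-- Build a cycle (in the `IsCycleOn` sense) from a closed nodup list. -/
private lemma cycle_of_list {G : SimpleGraph V} (Q : List V) (hne : Q ≠ [])
    (hn : Q.Nodup) (hch : Q.Chain' G.Adj) (h3 : 3 ≤ Q.length)
    (hcl : G.Adj (Q.getLast hne) (Q.head hne)) :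
    ∃ d : ZMod Q.length → V, IsCycleOn G Q.length d := by
  haveI : NeZero Q.length := ⟨by omega⟩
  haveI : Fact (1 < Q.length) := ⟨by omega⟩
  refine ⟨fun i => Q.getD i.val (Q.head hne), h3, ?_, ?_⟩
  · intro i j hij
    dsimp only at hij
    have hi := ZMod.val_lt i
    have hj := ZMod.val_lt j
    rw [List.getD_eq_getElem _ _ hi, List.getD_eq_getElem _ _ hj] at hij
    have := List.nodup_iff_injective_get.mp hn
      (a₁ := ⟨i.val, hi⟩) (a₂ := ⟨j.val, hj⟩) (by simpa using hij)
    exact zmod_val_inj (by simpa using congrArg Fin.val this)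
  · intro i
    dsimp only
    have hi := ZMod.val_lt i
    have hv1 : (i + 1).val = (i.val + 1) % Q.length := by
      rw [ZMod.val_add, ZMod.val_one]
    by_cases h : i.val + 1 < Q.length
    · have he : (i + 1).val = i.val + 1 := by rw [hv1, Nat.mod_eq_of_lt h]
      rw [List.getD_eq_getElem _ _ hi, he, List.getD_eq_getElem _ _ h]
      simpa using List.isChain_iff_getElem.mp hch i.val (by omega)
    · have hlast : i.val = Q.length - 1 := by omega
      have he : (i + 1).val = 0 := by
        rw [hv1, hlast, Nat.sub_add_cancel (by omega), Nat.mod_self]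
      rw [List.getD_eq_getElem _ _ hi, he, List.getD_eq_getElem _ _ (by omega)]
      have h1 := Q.getLast_eq_getElem hne
      have h2 := List.head_eq_getElem_zero hne
      rw [h1, h2] at hcl
      simp only [hlast]
      exact hcl

/-- Longest-cycle bound for an arc plus a path through `H`. -/
private lemma arc_bound {G : SimpleGraph V} {n : ℕ} {c : ZMod n → V}
    (hc : IsLongestCycle G n c) {H : Set V} (hdisj : Disjoint H (Set.range c))
    (s t : ZMod n) (hst : s ≠ t) (M : List V) (hMne : M ≠ [])
    (hMnd : M.Nodup) (hMch : M.Chain' G.Adj) (hMH : ∀ z ∈ M, z ∈ H)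
    (hM2 : 2 ≤ M.length)
    (hadj1 : G.Adj (c t) (M.head hMne))
    (hadj2 : G.Adj (M.getLast hMne) (c s)) :
    (t - s).val + 1 + M.length ≤ n := by
  have hn3 : 3 ≤ n := hc.1.1
  haveI : NeZero n := ⟨by omega⟩
  have hcinj : Function.Injective c := hc.1.2.1
  set d := (t - s).val with hd
  have hdlt : d < n := ZMod.val_lt _
  have hdcast : ((d : ℕ) : ZMod n) = t - s := by rw [hd, ZMod.natCast_val, ZMod.cast_id]
  have hdpos : 0 < d := ZMod.val_pos.mpr (sub_ne_zero_of_ne (Ne.symm hst))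
  set A : List V := (List.range (d + 1)).map (fun j : ℕ => c (s + (j : ZMod n))) with hA
  have hAlen : A.length = d + 1 := by simp [hA]
  have hAne : A ≠ [] := by
    intro h; rw [h] at hAlen; simp at hAlen
  have hAget : ∀ (i : ℕ) (h : i < A.length), A[i] = c (s + (i : ZMod n)) := by
    intro i h
    simp only [hA, List.getElem_map, List.getElem_range]
  have hArange : ∀ z ∈ A, z ∈ Set.range c := by
    intro z hz
    rw [hA] at hz
    simp only [List.mem_map] at hz
    obtain ⟨j, _, rfl⟩ := hz
    exact Set.mem_range_self _
  have hinj : ∀ j < d + 1, ∀ j' < d + 1, c (s + (j : ZMod n)) = c (s + (j' : ZMod n)) → j = j' := by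
    intro j hj j' hj' hcc
    have := hcinj hcc
    have h2 : (j : ZMod n) = (j' : ZMod n) := by
      have := add_left_cancel this
      exact this
    have := congrArg ZMod.val h2
    rwa [ZMod.val_cast_of_lt (by omega), ZMod.val_cast_of_lt (by omega)] at this
  have hAnd : A.Nodup := by
    rw [hA]
    refine List.Nodup.map_on ?_ List.nodup_range
    intro x hx y hy hxy
    rw [List.mem_range] at hx hy
    exact hinj x hx y hy hxy
  have hAch : A.Chain' G.Adj := by
    rw [hA]
    rw [List.Chain', List.isChain_map]
    rw [show d + 1 = d.succ from rfl, List.isChain_range_succ]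
    intro m hm
    have := hc.1.2.2 (s + (m : ZMod n))
    convert this using 2
    push_cast
    ring
  have hAlast : A.getLast hAne = c t := by
    rw [A.getLast_eq_getElem hAne, hAget _ (by omega)]
    rw [hAlen]
    simp only [Nat.add_sub_cancel]
    rw [hdcast]
    congr 1
    ring
  have hAhead : A.head hAne = c s := by
    rw [List.head_eq_getElem_zero hAne, hAget 0 (by omega)]
    simp
  set Q : List V := A ++ M with hQ
  have hQne : Q ≠ [] := by simp [hQ, hAne]
  have hQlen : Q.length = d + 1 + M.length := by simp [hQ, hAlen]
  have hQnd : Q.Nodup := by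
    rw [hQ, List.nodup_append]
    refine ⟨hAnd, hMnd, ?_⟩
    intro a haA b haM hab
    subst hab
    exact absurd (hArange a haA) (Set.disjoint_left.mp hdisj (hMH a haM))
  have hQch : Q.Chain' G.Adj := by
    rw [hQ, List.Chain', List.isChain_append]
    refine ⟨hAch, hMch, ?_⟩
    intro x hx y hy
    rw [List.getLast?_eq_getLast_of_ne_nil hAne] at hx
    rw [List.head?_eq_head hMne] at hy
    simp only [Option.mem_def, Option.some.injEq] at hx hy
    subst hx; subst hy
    rw [hAlast]
    exact hadj1
  have hQlast : Q.getLast hQne = M.getLast hMne := List.getLast_append_of_ne_nil _ hMne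
  have hQhead : Q.head hQne = A.head hAne := List.head_append_of_ne_nil hAne
  have hQcl : G.Adj (Q.getLast hQne) (Q.head hQne) := by
    rw [hQlast, hQhead, hAhead]
    exact hadj2
  obtain ⟨dd, hdd⟩ := cycle_of_list Q hQne hQnd hQch (by omega) hQcl
  have := hc.2 Q.length dd hdd
  omega

/-- Cardinality of `seg`. -/
private lemma seg_ncard (n : ℕ) [NeZero n] (s t : ZMod n) :
    (seg n s t).ncard = (t - s).val + 1 := by
  set d := (t - s).val with hdd
  have hdlt : d < n := ZMod.val_lt _
  have hd : s + ((d : ℕ) : ZMod n) = t := by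
    rw [hdd, ZMod.natCast_val, ZMod.cast_id]; ring
  have key : ∀ m : ℕ, m < n → s + (m : ZMod n) = t → m = d := by
    intro m hm he
    have h1 : (m : ZMod n) = ((d : ℕ) : ZMod n) := by
      have := he.trans hd.symm
      exact add_left_cancel this
    have := congrArg ZMod.val h1
    rwa [ZMod.val_cast_of_lt hm, ZMod.val_cast_of_lt hdlt] at this
  have hseg : seg n s t = (fun k : ℕ => s + (k : ZMod n)) '' (Set.Iio (d + 1)) := by
    ext x
    simp only [seg, Set.mem_setOf_eq, Set.mem_image, Set.mem_Iio]
    constructor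
    · rintro ⟨k, rfl, hk⟩
      refine ⟨k, ?_, rfl⟩
      by_contra hkd
      exact hk d (by omega) hd
    · rintro ⟨k, hk, rfl⟩
      refine ⟨k, rfl, fun m hm he => ?_⟩
      have := key m (by omega) he
      omega
  rw [hseg, ← Finset.coe_range, ← Finset.coe_image, Set.ncard_coe_finset]
  rw [Finset.card_image_of_injOn, Finset.card_range]
  intro a ha b hb hab
  simp only [Finset.coe_range, Set.mem_Iio] at ha hb
  have h1 : (a : ZMod n) = (b : ZMod n) := add_left_cancel hab
  have := congrArg ZMod.val h1
  rwa [ZMod.val_cast_of_lt (by omega), ZMod.val_cast_of_lt (by omega)] at this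

/-- Phase 1: two distinct cycle vertices with distinct neighbours in `H`. -/
private lemma two_attach {G : SimpleGraph V} (h2 : TwoConnected G)
    {n : ℕ} {c : ZMod n → V} (hc : IsLongestCycle G n c)
    {H : Set V} (hH : IsCompOff G (Set.range c) H) (hH2 : 2 ≤ H.ncard) :
    ∃ (i1 i2 : ZMod n) (x1 x2 : V), c i1 ≠ c i2 ∧ x1 ∈ H ∧ x2 ∈ H ∧ x1 ≠ x2 ∧
      G.Adj (c i1) x1 ∧ G.Adj (c i2) x2 := by
  have hn3 : 3 ≤ n := hc.1.1
  haveI : NeZero n := ⟨by omega⟩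
  haveI : Fact (1 < n) := ⟨by omega⟩
  have hcinj : Function.Injective c := hc.1.2.1
  have hdisj : Disjoint H (Set.range c) := hH.2.1
  have hcomp := hH.2.2.2
  have hcH : ∀ i : ZMod n, c i ∉ H := fun i hi =>
    Set.disjoint_left.mp hdisj hi (Set.mem_range_self i)
  -- any H-to-outside edge lands on the cycle
  have toC : ∀ u v : V, u ∈ H → v ∉ H → G.Adj u v → ∃ i : ZMod n, v = c i := by
    intro u v hu hv hadj
    by_contra hnc
    push_neg at hnc
    exact hcomp u v hu hv (fun ⟨i, hi⟩ => hnc i hi.symm) hadj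
  -- first attachment
  obtain ⟨y0, hy0⟩ := hH.1
  obtain ⟨w0⟩ := h2.2.1.preconnected y0 (c 0)
  obtain ⟨u1, v1, hu1, hv1, hadj1⟩ := exit_plain w0 hy0 (hcH 0)
  obtain ⟨i1, rfl⟩ := toC u1 v1 hu1 hv1 hadj1
  -- second attachment avoiding x1 := u1
  obtain ⟨y1, hy1, hy1ne⟩ := Set.exists_ne_of_one_lt_ncard (show 1 < H.ncard by omega) u1
  have hy1S : y1 ∈ ({u1}ᶜ : Set V) := by simpa using hy1ne
  have hc0S : c 0 ∈ ({u1}ᶜ : Set V) := by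
    simp only [Set.mem_compl_iff, Set.mem_singleton_iff]
    intro h; exact hcH 0 (h ▸ hu1)
  obtain ⟨w1⟩ := (h2.2.2 u1).preconnected ⟨y1, hy1S⟩ ⟨c 0, hc0S⟩
  obtain ⟨u2, v2, hu2S, hv2S, hu2, hv2, hadj2⟩ := exit_subtype w1 hy1 (hcH 0)
  obtain ⟨i2, rfl⟩ := toC u2 v2 hu2 hv2 hadj2
  have hu2ne : u2 ≠ u1 := by simpa using hu2S
  by_cases hne : c i2 = c i1
  · -- c i1 has two distinct H-neighbours u1, u2; find another attachment avoiding c i1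
    have hx1T : u1 ∈ ({c i1}ᶜ : Set V) := by
      simp only [Set.mem_compl_iff, Set.mem_singleton_iff]
      intro h; exact hcH i1 (h ▸ hu1)
    have h1ne : c (i1 + 1) ≠ c i1 := by
      intro h
      have := hcinj h
      have h10 : (1 : ZMod n) = 0 := by
        have h' : i1 + 1 = i1 + 0 := by rw [add_zero]; exact this
        exact add_left_cancel h'
      exact one_ne_zero h10
    have hcT : c (i1 + 1) ∈ ({c i1}ᶜ : Set V) := by simpa using h1ne
    obtain ⟨w2⟩ := (h2.2.2 (c i1)).preconnected ⟨u1, hx1T⟩ ⟨c (i1 + 1), hcT⟩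
    obtain ⟨u3, v3, hu3T, hv3T, hu3, hv3, hadj3⟩ := exit_subtype w2 hu1 (hcH (i1 + 1))
    obtain ⟨i3, rfl⟩ := toC u3 v3 hu3 hv3 hadj3
    have hv3ne : c i3 ≠ c i1 := by simpa using hv3T
    by_cases hu3x : u3 = u1
    · exact ⟨i1, i3, u2, u1, hv3ne.symm, hu2, hu1, hu2ne,
        hne ▸ hadj2.symm, hu3x ▸ hadj3.symm⟩
    · exact ⟨i1, i3, u1, u3, hv3ne.symm, hu1, hu3, fun h => hu3x h.symm,
        hadj1.symm, hadj3.symm⟩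
  · exact ⟨i1, i2, u1, u2, fun h => hne h.symm, hu1, hu2, fun h => hu2ne h.symm,
      hadj1.symm, hadj2.symm⟩

end Aux

theorem stmt_18 (G : SimpleGraph V) (h2 : TwoConnected G)
    (n : ℕ) (c : ZMod n → V) (hc : IsLongestCycle G n c)
    (H : Set V) (hH : IsCompOff G (Set.range c) H) (hH2 : 2 ≤ H.ncard) :
    ∃ i1 i2 : ZMod n, c i1 ≠ c i2 ∧
      (∃ x ∈ H, G.Adj (c i1) x) ∧ (∃ x ∈ H, G.Adj (c i2) x) ∧
      2 ≤ ({x | x ∈ H ∧ G.Adj (c i1) x} ∪ {x | x ∈ H ∧ G.Adj (c i2) x}).ncard ∧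
      4 ≤ (seg n i1 i2).ncard ∧ 4 ≤ (seg n i2 i1).ncard := by
  have hn3 : 3 ≤ n := hc.1.1
  haveI : NeZero n := ⟨by omega⟩
  have hdisj : Disjoint H (Set.range c) := hH.2.1
  obtain ⟨i1, i2, x1, x2, hne, hx1, hx2, hx12, hadj1, hadj2⟩ := two_attach h2 hc hH hH2
  have hine : i1 ≠ i2 := fun h => hne (congrArg c h)
  -- path from x1 to x2 inside H
  obtain ⟨w⟩ := hH.2.2.1.preconnected ⟨x1, hx1⟩ ⟨x2, hx2⟩
  set L : List V := w.toPath.1.support.map Subtype.val with hL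
  have hsupne := SimpleGraph.Walk.support_ne_nil w.toPath.1
  have hLne : L ≠ [] := by
    rw [hL]
    intro h
    exact hsupne (List.map_eq_nil_iff.mp h)
  have hLnd : L.Nodup := by
    rw [hL]
    exact (w.toPath.2.support_nodup).map Subtype.val_injective
  have hLH : ∀ z ∈ L, z ∈ H := by
    intro z hz
    rw [hL] at hz
    simp only [List.mem_map] at hz
    obtain ⟨⟨a, ha⟩, _, rfl⟩ := hz
    exact ha
  have hLch : L.Chain' G.Adj := by
    rw [hL]
    exact List.isChain_map_of_isChain _ (fun a b h => by simpa using h)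
      (w.toPath.1.isChain_adj_support)
  have hLhead : L.head hLne = x1 := by
    have h1 : L.head? = some x1 := by
      rw [hL, List.head?_map, List.head?_eq_head hsupne, SimpleGraph.Walk.head_support]
      rfl
    rw [List.head?_eq_head hLne] at h1
    exact Option.some_inj.mp h1
  have hLlast : L.getLast hLne = x2 := by
    have h1 : L.getLast? = some x2 := by
      rw [hL, List.getLast?_map, List.getLast?_eq_getLast_of_ne_nil hsupne,
        SimpleGraph.Walk.getLast_support]
      rfl
    rw [List.getLast?_eq_getLast_of_ne_nil hLne] at h1
    exact Option.some_inj.mp h1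
  have hL2 : 2 ≤ L.length := by
    rcases L with _ | ⟨a, _ | ⟨b, t⟩⟩
    · exact absurd rfl hLne
    · exfalso
      apply hx12
      have h1 := hLhead
      have h2 := hLlast
      simp [List.head, List.getLast] at h1 h2
      rw [← h1, ← h2]
    · simp only [List.length_cons]
      omega
  -- arc bounds
  have hb1 : (i2 - i1).val + 1 + L.length ≤ n := by
    have hrne : L.reverse ≠ [] := by simpa using hLne
    have h1 : L.reverse.head hrne = x2 := by
      rw [List.head_reverse]
      exact hLlast
    have h2 : L.reverse.getLast hrne = x1 := by
      rw [List.getLast_reverse]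
      exact hLhead
    have := arc_bound hc hdisj i1 i2 hine L.reverse hrne
      (List.nodup_reverse.mpr hLnd) ((List.isChain_reverse).mpr (hLch.imp fun a b h => h.symm))
      (fun z hz => hLH z (List.mem_reverse.mp hz)) (by simpa using hL2)
      (h1 ▸ hadj2) (h2 ▸ hadj1.symm)
    simpa using this
  have hb2 : (i1 - i2).val + 1 + L.length ≤ n :=
    arc_bound hc hdisj i2 i1 hine.symm L hLne hLnd hLch hLH hL2
      (hLhead ▸ hadj1) (hLlast ▸ hadj2.symm)
  -- the two arc lengths sum to n
  haveI : NeZero (i2 - i1) := ⟨sub_ne_zero_of_ne hine.symm⟩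
  have hsum : (i1 - i2).val = n - (i2 - i1).val := by
    rw [show i1 - i2 = -(i2 - i1) by ring, ZMod.val_neg_of_ne_zero]
  have hd1lt : (i2 - i1).val < n := ZMod.val_lt _
  refine ⟨i1, i2, hne, ⟨x1, hx1, hadj1⟩, ⟨x2, hx2, hadj2⟩, ?_, ?_, ?_⟩
  · have hsub : ({x1, x2} : Set V) ⊆
        ({x | x ∈ H ∧ G.Adj (c i1) x} ∪ {x | x ∈ H ∧ G.Adj (c i2) x}) := by
      rintro z (rfl | rfl)
      · exact Or.inl ⟨hx1, hadj1⟩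
      · exact Or.inr ⟨hx2, hadj2⟩
    calc 2 = ({x1, x2} : Set V).ncard := (Set.ncard_pair hx12).symm
      _ ≤ _ := Set.ncard_le_ncard hsub (Set.toFinite _)
  · rw [seg_ncard]
    omega
  · rw [seg_ncard]
    omega
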